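/- Let B be a polynomial with B(0) ≠ 0, A a polynomial, K ∪ L ⊂ ℂ compact with B(z) ≠ 0 on K ∪ L, and p > deg A, q > deg B positive integers. Then for all sufficiently small nonzero c, d ∈ ℂ, setting Ã(z) = A(z) + d z^p and B̃(z) = B(z) + (cz)^q, one has: B̃ ≠ 0 on K ∪ L ∪ {0}, sup_{z∈K∪L} |Ã(z)/B̃(z) − A(z)/B(z)| is arbitrarily small, and d can be chosen so that the Taylor series Σ δ_ν z^ν of Ã/B̃ at 0 satisfies det H_q(δ_{p−q+1}) ≠ 0, whence Ã/B̃ ∈ D_{p,q} and [p/q]_{Ã/B̃} = Ã/B̃. -/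

import Mathlib

/-- The q×q Hankel matrix of the coefficient sequence `a` at `a_{p-q+1}`:
entry (i,j) (0-based) is `a_{p-q+i+j+1}`, with the convention `a_ν = 0` for `ν < 0`. -/
def padeHankel (a : ℕ → ℂ) (p q : ℕ) : Matrix (Fin q) (Fin q) ℂ :=
  Matrix.of fun i j =>
    if h : 0 ≤ (p : ℤ) - q + i + j + 1 then a ((p : ℤ) - q + i + j + 1).toNat else 0

/-- `N/D` is a Padé approximant of type `(p,q)` to the formal power series with
coefficients `a`: deg N ≤ p, deg D ≤ q, D(0) = 1, and the Taylor expansion of `N/D`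
at 0 agrees with `a` up to order `p+q`. -/
def IsPadeApprox (a : ℕ → ℂ) (p q : ℕ) (N D : Polynomial ℂ) : Prop :=
  N.natDegree ≤ p ∧ D.natDegree ≤ q ∧ D.coeff 0 = 1 ∧
  ∃ ps : FormalMultilinearSeries ℂ ℂ ℂ,
    HasFPowerSeriesAt (fun z => N.eval z / D.eval z) ps 0 ∧
    ∀ ν ≤ p + q, ps.coeff ν = a ν

open Polynomial


lemma hasSum_poly (P : Polynomial ℂ) (z : ℂ) :
    HasSum (fun n => z ^ n • P.coeff n) (P.eval z) := by
  have hz : ∀ n ∉ Finset.range (P.natDegree + 1), z ^ n • P.coeff n = 0 := by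
    intro n hn
    rw [Finset.mem_range, not_lt] at hn
    rw [P.coeff_eq_zero_of_natDegree_lt (by omega), smul_zero]
  have h : HasSum (fun n => z ^ n • P.coeff n)
      (∑ b ∈ Finset.range (P.natDegree + 1), z ^ b • P.coeff b) := hasSum_sum_of_ne_finset_zero hz
  convert h using 1
  rw [Polynomial.eval_eq_sum_range]
  simp [smul_eq_mul, mul_comm]

lemma hasSum_poly_mul (Q : Polynomial ℂ) (δ : ℕ → ℂ) (z s : ℂ)
    (hs : HasSum (fun n => z ^ n • δ n) s) :
    HasSum (fun n => z ^ n • (∑ k ∈ Finset.range (n+1), Q.coeff k * δ (n - k)))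
      (Q.eval z * s) := by
  induction Q using Polynomial.induction_on' with
  | add Q1 Q2 ih1 ih2 =>
    have h := ih1.add ih2
    convert h using 1
    · funext n
      simp only [coeff_add, add_mul, Finset.sum_add_distrib, smul_eq_mul]
      ring
    · simp [add_mul]
  | monomial k a =>
    have h2 := hs.mul_left (a * z ^ k)
    have hinj : Function.Injective (· + k : ℕ → ℕ) := add_left_injective k
    set f : ℕ → ℂ := fun m => z ^ m • (if k ≤ m then a * δ (m - k) else 0) with hf
    have hvan : ∀ m ∉ Set.range (· + k : ℕ → ℕ), f m = 0 := by
      intro m hm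
      have hkm : ¬ (k ≤ m) := by
        intro hkm
        have : m - k + k = m := by omega
        exact hm ⟨m - k, this⟩
      simp [hf, hkm]
    have hcomp : (f ∘ (· + k : ℕ → ℕ)) = fun n => (a * z ^ k) * (z ^ n • δ n) := by
      funext n
      simp only [Function.comp_apply, hf, smul_eq_mul]
      rw [if_pos (by omega)]
      have hnk : n + k - k = n := by omega
      rw [hnk, pow_add]
      ring
    have key : HasSum f ((a * z ^ k) * s) :=
      (hinj.hasSum_iff hvan).mp (by rw [hcomp]; exact h2)
    convert key using 1
    · funext n
      simp only [hf]
      congr 1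
      rw [Finset.sum_congr rfl (fun j _ => by rw [coeff_monomial, ite_mul, zero_mul])]
      rw [Finset.sum_ite_eq]
      simp [Nat.lt_succ_iff]
    · rw [eval_monomial]

lemma ofScalars_coeff' (c : ℕ → ℂ) (n : ℕ) :
    (FormalMultilinearSeries.ofScalars ℂ c).coeff n = c n := by
  simp [FormalMultilinearSeries.ofScalars, FormalMultilinearSeries.coeff,
    ContinuousMultilinearMap.mkPiAlgebraFin_apply, List.prod_ofFn]

lemma coeff_unique {γ γ' : ℕ → ℂ} {g : ℂ → ℂ}
    (h1 : ∀ᶠ z in nhds (0:ℂ), HasSum (fun n => z ^ n • γ n) (g z))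
    (h2 : ∀ᶠ z in nhds (0:ℂ), HasSum (fun n => z ^ n • γ' n) (g z)) : γ = γ' := by
  have H1 : HasFPowerSeriesAt g (FormalMultilinearSeries.ofScalars ℂ γ) 0 := by
    rw [hasFPowerSeriesAt_iff]
    simpa [ofScalars_coeff'] using h1
  have H2 : HasFPowerSeriesAt g (FormalMultilinearSeries.ofScalars ℂ γ') 0 := by
    rw [hasFPowerSeriesAt_iff]
    simpa [ofScalars_coeff'] using h2
  have := H1.eq_formalMultilinearSeries H2
  funext n
  have h := congrArg (fun p : FormalMultilinearSeries ℂ ℂ ℂ => p.coeff n) this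
  simpa [ofScalars_coeff'] using h

lemma rec_unique {b δ δ' : ℕ → ℂ} (hb : b 0 ≠ 0)
    (h : ∀ n, ∑ k ∈ Finset.range (n+1), b k * δ (n - k)
            = ∑ k ∈ Finset.range (n+1), b k * δ' (n - k)) : δ = δ' := by
  funext n
  induction n using Nat.strong_induction_on with
  | _ n ih =>
    have hn := h n
    rw [Finset.sum_range_succ', Finset.sum_range_succ'] at hn
    have heq : ∀ k ∈ Finset.range n, b (k+1) * δ (n - (k+1)) = b (k+1) * δ' (n - (k+1)) := by
      intro k hk
      rw [Finset.mem_range] at hk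
      rw [ih (n - (k+1)) (by omega)]
    rw [Finset.sum_congr rfl heq] at hn
    rw [Nat.sub_zero] at hn
    have hn2 := add_left_cancel hn
    exact mul_left_cancel₀ hb hn2


lemma ps_coeff_eq (P Q : Polynomial ℂ) (hQ0 : Q.eval 0 ≠ 0)
    {ps : FormalMultilinearSeries ℂ ℂ ℂ}
    (hps : HasFPowerSeriesAt (fun z => P.eval z / Q.eval z) ps 0) :
    ps.coeff = fun n => PowerSeries.coeff n ((P : PowerSeries ℂ) * (Q : PowerSeries ℂ)⁻¹) := by
  have hC : PowerSeries.constantCoeff (Q : PowerSeries ℂ) ≠ 0 := by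
    rwa [← PowerSeries.coeff_zero_eq_constantCoeff_apply, Polynomial.coeff_coe,
      Polynomial.coeff_zero_eq_eval_zero]
  set δ' : ℕ → ℂ := fun n => PowerSeries.coeff n ((P : PowerSeries ℂ) * (Q : PowerSeries ℂ)⁻¹)
    with hδ'
  -- formal recurrence
  have hformal : ∀ n, ∑ k ∈ Finset.range (n+1), Q.coeff k * δ' (n - k) = P.coeff n := by
    intro n
    have hmul : (Q : PowerSeries ℂ) * ((P : PowerSeries ℂ) * (Q : PowerSeries ℂ)⁻¹)
        = (P : PowerSeries ℂ) := by
      rw [mul_comm ((P : PowerSeries ℂ)), ← mul_assoc, PowerSeries.mul_inv_cancel _ hC, one_mul]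
    have := congrArg (PowerSeries.coeff n) hmul
    rw [PowerSeries.coeff_mul, Finset.Nat.sum_antidiagonal_eq_sum_range_succ_mk] at this
    simpa [Polynomial.coeff_coe] using this
  -- analytic recurrence
  have h0 := hasFPowerSeriesAt_iff.mp hps
  have hQnz : ∀ᶠ z in nhds (0:ℂ), Q.eval z ≠ 0 :=
    (Q.continuous_aeval).continuousAt.eventually_ne hQ0
  have hanalytic : (fun n => ∑ k ∈ Finset.range (n+1), Q.coeff k * ps.coeff (n - k))
      = P.coeff := by
    apply coeff_unique (g := fun z => P.eval z)
    · filter_upwards [h0, hQnz] with z hz hzQ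
      have := hasSum_poly_mul Q ps.coeff z _ (by simpa using hz)
      rwa [mul_div_cancel₀ _ hzQ] at this
    · filter_upwards with z
      exact hasSum_poly P z
  exact rec_unique (b := Q.coeff)
    (by rwa [Polynomial.coeff_zero_eq_eval_zero])
    (fun n => by rw [congrFun hanalytic n, hformal n])

lemma coeff_decomp (A Bt : Polynomial ℂ) (d : ℂ) (p n : ℕ) :
    PowerSeries.coeff n (((A + C d * X ^ p : Polynomial ℂ) : PowerSeries ℂ)
        * ((Bt : PowerSeries ℂ))⁻¹)
    = PowerSeries.coeff n ((A : PowerSeries ℂ) * ((Bt : PowerSeries ℂ))⁻¹)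
      + d * (if p ≤ n then PowerSeries.coeff (n - p) ((Bt : PowerSeries ℂ))⁻¹ else 0) := by
  rw [Polynomial.coe_add, Polynomial.coe_mul, Polynomial.coe_C, Polynomial.coe_pow,
    Polynomial.coe_X, add_mul, map_add]
  congr 1
  rw [mul_assoc, PowerSeries.coeff_C_mul]
  congr 1
  rw [mul_comm, PowerSeries.coeff_mul_X_pow']


lemma hankel_det_poly (α β : ℕ → ℂ) (p q : ℕ) (hq : 0 < q) (hβ0 : β 0 ≠ 0) :
    {d : ℂ | (padeHankel (fun n => α n + d * (if p ≤ n then β (n - p) else 0)) p q).det = 0}.Finite := by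
  set σf : ℕ → ℂ := fun n => if p ≤ n then β (n - p) else 0 with hσf
  set Ppoly : Matrix (Fin q) (Fin q) (Polynomial ℂ) := Matrix.of fun i j =>
    if h : 0 ≤ (p : ℤ) - q + i + j + 1 then
      (C (α ((p : ℤ) - q + i + j + 1).toNat) + C (σf ((p : ℤ) - q + i + j + 1).toNat) * X)
    else 0 with hPpoly
  -- evaluation identity
  have heval : ∀ d : ℂ, (Ppoly.det).eval d
      = (padeHankel (fun n => α n + d * σf n) p q).det := by
    intro d
    have h2 := RingHom.map_det (Polynomial.evalRingHom d) Ppoly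
    rw [RingHom.mapMatrix_apply] at h2
    rw [show Polynomial.eval d Ppoly.det = (Polynomial.evalRingHom d) Ppoly.det from rfl, h2]
    congr 1
    ext i j
    rw [Matrix.map_apply]
    simp only [hPpoly, Matrix.of_apply, padeHankel, coe_evalRingHom]
    split
    · simp only [eval_add, eval_mul, eval_C, eval_X]
      ring
    · simp
  -- the coefficient-1 matrix
  set Mβ : Matrix (Fin q) (Fin q) ℂ := Matrix.of fun i j =>
    if q ≤ (i : ℕ) + j + 1 then β ((i : ℕ) + j + 1 - q) else 0 with hMβ
  have hcoeff1 : ∀ i j, (Ppoly i j).coeff 1 = Mβ i j := by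
    intro i j
    simp only [hPpoly, Matrix.of_apply, hMβ]
    split
    · rename_i h
      have h1 : ((p : ℤ) - q + i + j + 1).toNat = p + i + j + 1 - q := by omega
      simp only [coeff_add, coeff_C, if_neg (one_ne_zero), coeff_C_mul, coeff_X_one, mul_one,
        zero_add, h1, hσf]
      have hiff : p ≤ p + (i : ℕ) + j + 1 - q ↔ q ≤ (i : ℕ) + j + 1 := by omega
      by_cases hc : q ≤ (i : ℕ) + j + 1
      · rw [if_pos (hiff.mpr hc), if_pos hc]
        congr 1
        omega
      · rw [if_neg (fun hx => hc (hiff.mp hx)), if_neg hc]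
    · rename_i h
      rw [if_neg (by omega), coeff_zero]
  have hdeg : ∀ i j, (Ppoly i j).natDegree ≤ 1 := by
    intro i j
    simp only [hPpoly, Matrix.of_apply]
    split
    · apply le_trans (natDegree_add_le _ _)
      simp [natDegree_C_mul_le]
      exact le_trans (natDegree_mul_le) (by simp)
    · simp
  -- coefficient q of det
  have hcq : (Ppoly.det).coeff q = Mβ.det := by
    rw [Matrix.det_apply, Polynomial.finset_sum_coeff]
    rw [Matrix.det_apply]
    apply Finset.sum_congr rfl
    intro σ _
    rw [Polynomial.coeff_smul]
    congr 1
    have hprod := Polynomial.coeff_prod_of_natDegree_le (s := Finset.univ)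
      (fun i => Ppoly (σ i) i) 1 (fun i _ => hdeg (σ i) i)
    simp only [Finset.card_univ, Fintype.card_fin, mul_one] at hprod
    rw [hprod]
    exact Finset.prod_congr rfl (fun i _ => hcoeff1 (σ i) i)
  -- det Mβ ≠ 0
  have hMβdet : Mβ.det ≠ 0 := by
    set N : Matrix (Fin q) (Fin q) ℂ := Mβ.submatrix id (Fin.revPerm) with hN
    have hNdet : N.det = Equiv.Perm.sign (Fin.revPerm : Equiv.Perm (Fin q)) * Mβ.det :=
      Matrix.det_permute' _ _
    have hNentry : ∀ i j : Fin q, N i j = if (j : ℕ) ≤ i then β ((i : ℕ) - j) else 0 := by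
      intro i j
      simp only [hN, Matrix.submatrix_apply, id, hMβ, Matrix.of_apply, Fin.revPerm_apply,
        Fin.val_rev]
      have hj : (j : ℕ) < q := j.isLt
      by_cases hc : (j : ℕ) ≤ i
      · rw [if_pos (by omega), if_pos hc]
        congr 1
        omega
      · rw [if_neg (by omega), if_neg hc]
    have htri : N.BlockTriangular OrderDual.toDual := by
      intro i j hij
      rw [hNentry]
      rw [if_neg (by simp at hij; omega)]
    have : N.det = ∏ i : Fin q, N i i := Matrix.det_of_lowerTriangular N htri
    have hdiag : ∀ i : Fin q, N i i = β 0 := by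
      intro i
      rw [hNentry, if_pos le_rfl, Nat.sub_self]
    have hNne : N.det ≠ 0 := by
      rw [this, Finset.prod_congr rfl (fun i _ => hdiag i), Finset.prod_const]
      exact pow_ne_zero _ hβ0
    intro hzero
    rw [hzero, mul_zero] at hNdet
    exact hNne hNdet
  have hPne : Ppoly.det ≠ 0 := fun h => hMβdet (by rw [← hcq, h, coeff_zero])
  have := Polynomial.finite_setOf_isRoot hPne
  apply this.subset
  intro d hd
  simp only [Set.mem_setOf_eq] at hd ⊢
  rw [IsRoot, heval d]
  exact hd


open Polynomial in
theorem key_lemma_6_1_construction (A B : Polynomial ℂ) (hB0 : B.eval 0 ≠ 0)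
    (K L : Set ℂ) (hKL : IsCompact (K ∪ L)) (hBKL : ∀ z ∈ K ∪ L, B.eval z ≠ 0)
    (p q : ℕ) (hp : A.natDegree < p) (hq : B.natDegree < q) :
    ∀ ε > (0:ℝ), ∀ a > (0:ℝ), ∃ c d : ℂ, c ≠ 0 ∧ d ≠ 0 ∧ ‖c‖ < ε ∧ ‖d‖ < ε ∧
      (∀ z ∈ K ∪ L ∪ {0}, (B + (C c * X) ^ q).eval z ≠ 0) ∧
      (∀ z ∈ K ∪ L,
        ‖(A + C d * X ^ p).eval z / (B + (C c * X) ^ q).eval z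
          - A.eval z / B.eval z‖ < a) ∧
      ∃ ps : FormalMultilinearSeries ℂ ℂ ℂ,
        HasFPowerSeriesAt
          (fun z => (A + C d * X ^ p).eval z / (B + (C c * X) ^ q).eval z) ps 0 ∧
        (padeHankel ps.coeff p q).det ≠ 0 ∧
        ∃ N D : Polynomial ℂ, IsPadeApprox ps.coeff p q N D ∧
          N * (B + (C c * X) ^ q) = D * (A + C d * X ^ p) := by
  intro ε hε a ha
  have hq0 : 0 < q := by omega
  -- bounds on the compact set
  obtain ⟨m, hm, hmB⟩ : ∃ m > (0:ℝ), ∀ z ∈ K ∪ L, m ≤ ‖B.eval z‖ := by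
    rcases (K ∪ L).eq_empty_or_nonempty with h | hne
    · exact ⟨1, one_pos, fun z hz => by rw [h] at hz; exact absurd hz (Set.notMem_empty z)⟩
    · obtain ⟨z₀, hz₀, hmin⟩ := hKL.exists_isMinOn hne
        (Continuous.continuousOn (by continuity : Continuous fun z => ‖B.eval z‖))
      exact ⟨‖B.eval z₀‖, norm_pos_iff.mpr (hBKL z₀ hz₀), fun z hz => hmin hz⟩
  obtain ⟨R₀, hR₀⟩ := Bornology.IsBounded.exists_norm_le hKL.isBounded
  set R := max R₀ 1 with hRdef
  have hR : (0:ℝ) < R := lt_of_lt_of_le one_pos (le_max_right _ _)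
  have hRz : ∀ z ∈ K ∪ L, ‖z‖ ≤ R := fun z hz => le_trans (hR₀ z hz) (le_max_left _ _)
  obtain ⟨MA₀, hMA₀⟩ := hKL.exists_bound_of_continuousOn
    (Continuous.continuousOn (by continuity : Continuous fun z : ℂ => A.eval z))
  set MA := max MA₀ 1 with hMAdef
  have hMA : (0:ℝ) < MA := lt_of_lt_of_le one_pos (le_max_right _ _)
  have hMAz : ∀ z ∈ K ∪ L, ‖A.eval z‖ ≤ MA := fun z hz => le_trans (hMA₀ z hz) (le_max_left _ _)
  obtain ⟨MB₀, hMB₀⟩ := hKL.exists_bound_of_continuousOn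
    (Continuous.continuousOn (by continuity : Continuous fun z : ℂ => B.eval z))
  set MB := max MB₀ 1 with hMBdef
  have hMB : (0:ℝ) < MB := lt_of_lt_of_le one_pos (le_max_right _ _)
  have hMBz : ∀ z ∈ K ∪ L, ‖B.eval z‖ ≤ MB := fun z hz => le_trans (hMB₀ z hz) (le_max_left _ _)
  set t := a * m ^ 2 / 8 with htdef
  have ht : 0 < t := by positivity
  -- choose c
  set creal := min (ε / 2) (min 1 (min (m / 2) (t / MA)) / R) with hcreal
  have hcrealpos : 0 < creal := by
    apply lt_min (by linarith)
    positivity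
  set c : ℂ := (creal : ℂ) with hcdef
  have hcnorm : ‖c‖ = creal := by
    rw [hcdef, Complex.norm_real, Real.norm_of_nonneg (le_of_lt hcrealpos)]
  have hcne : c ≠ 0 := by
    simp only [hcdef, ne_eq, Complex.ofReal_eq_zero]
    exact ne_of_gt hcrealpos
  have hcε : ‖c‖ < ε := by
    rw [hcnorm]
    calc creal ≤ ε / 2 := min_le_left _ _
      _ < ε := by linarith
  have hcR : creal * R ≤ min 1 (min (m / 2) (t / MA)) := by
    have h1 : creal ≤ min 1 (min (m / 2) (t / MA)) / R := min_le_right _ _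
    calc creal * R ≤ (min 1 (min (m / 2) (t / MA)) / R) * R :=
          mul_le_mul_of_nonneg_right h1 (le_of_lt hR)
      _ = min 1 (min (m / 2) (t / MA)) := by field_simp
  have hcR1 : creal * R ≤ 1 := le_trans hcR (min_le_left _ _)
  have hcRm : creal * R ≤ m / 2 := le_trans hcR (le_trans (min_le_right _ _) (min_le_left _ _))
  have hcRt : creal * R ≤ t / MA := le_trans hcR (le_trans (min_le_right _ _) (min_le_right _ _))
  set Bt := B + (C c * X) ^ q with hBtdef
  have hBtz' : ∀ z : ℂ, Bt.eval z = B.eval z + (c * z) ^ q := by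
    intro z; simp [hBtdef]
  have hBt0 : Bt.eval 0 = B.eval 0 := by
    rw [hBtz' 0, mul_zero, zero_pow hq0.ne', add_zero]
  have hBt0ne : Bt.eval 0 ≠ 0 := by rw [hBt0]; exact hB0
  -- lower bound for Bt on K ∪ L
  have hccR : ∀ z ∈ K ∪ L, ‖((c * z) ^ q : ℂ)‖ ≤ creal * R := by
    intro z hz
    rw [norm_pow, norm_mul, hcnorm]
    calc (creal * ‖z‖) ^ q ≤ (creal * R) ^ q := by
          apply pow_le_pow_left₀ (by positivity)
          exact mul_le_mul_of_nonneg_left (hRz z hz) (le_of_lt hcrealpos)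
      _ ≤ creal * R := pow_le_of_le_one (by positivity) hcR1 hq0.ne'
  have hBtlow : ∀ z ∈ K ∪ L, m / 2 ≤ ‖Bt.eval z‖ := by
    intro z hz
    have h1 := hccR z hz
    have h2 : ‖B.eval z‖ ≤ ‖Bt.eval z‖ + ‖((c * z) ^ q : ℂ)‖ := by
      calc ‖B.eval z‖ = ‖Bt.eval z - (c * z) ^ q‖ := by rw [hBtz' z]; ring_nf
        _ ≤ ‖Bt.eval z‖ + ‖((c * z) ^ q : ℂ)‖ := norm_sub_le _ _
    have h3 := hmB z hz
    linarith
  have hBtne : ∀ z ∈ K ∪ L, Bt.eval z ≠ 0 := by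
    intro z hz
    have := hBtlow z hz
    intro h0
    rw [h0, norm_zero] at this
    linarith
  -- formal power series data
  set Binv := ((Bt : PowerSeries ℂ))⁻¹ with hBinv
  set αf : ℕ → ℂ := fun n => PowerSeries.coeff n ((A : PowerSeries ℂ) * Binv) with hαf
  set βf : ℕ → ℂ := fun j => PowerSeries.coeff j Binv with hβf
  have hconst : PowerSeries.constantCoeff (Bt : PowerSeries ℂ) = B.eval 0 := by
    rw [← PowerSeries.coeff_zero_eq_constantCoeff_apply, Polynomial.coeff_coe,
      Polynomial.coeff_zero_eq_eval_zero, hBt0]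
  have hβ0 : βf 0 ≠ 0 := by
    rw [hβf]
    simp only [hBinv]
    rw [PowerSeries.coeff_zero_eq_constantCoeff_apply, PowerSeries.constantCoeff_inv, hconst]
    exact inv_ne_zero hB0
  -- choose d
  set bad := {d : ℂ | (padeHankel (fun n => αf n + d * (if p ≤ n then βf (n - p) else 0))
    p q).det = 0} ∪ {(0:ℂ)} with hbad
  have hbadfin : bad.Finite := (hankel_det_poly αf βf p q hq0 hβ0).union (Set.finite_singleton 0)
  set r' := min (ε / 2) (t / (R ^ p * MB)) with hr'def
  have hr' : 0 < r' := by
    apply lt_min (by linarith)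
    positivity
  have hinfball : {z : ℂ | ‖z‖ < r'}.Infinite := by
    apply Set.infinite_of_injective_forall_mem (f := fun k : ℕ => ((r' / (k + 2) : ℝ) : ℂ))
    · intro i j hij
      simp only [Complex.ofReal_inj] at hij
      rw [div_eq_div_iff (by positivity) (by positivity)] at hij
      have h2 := mul_left_cancel₀ (ne_of_gt hr') hij
      have : (i : ℝ) = j := by linarith
      exact_mod_cast this
    · intro k
      simp only [Set.mem_setOf_eq, Complex.norm_real]
      rw [Real.norm_of_nonneg (by positivity)]
      apply div_lt_self hr'
      have : (0:ℝ) ≤ (k : ℝ) := Nat.cast_nonneg k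
      linarith
  obtain ⟨d, hdball, hdbad⟩ := (hinfball.diff hbadfin).nonempty
  simp only [Set.mem_setOf_eq] at hdball
  have hdne : d ≠ 0 := fun h => hdbad (by rw [hbad, h]; exact Set.mem_union_right _ rfl)
  have hdr' : ‖d‖ < r' := hdball
  have hdε : ‖d‖ < ε := lt_of_lt_of_le hdr' (le_trans (min_le_left _ _) (by linarith))
  have hdt : ‖d‖ ≤ t / (R ^ p * MB) := le_of_lt (lt_of_lt_of_le hdr' (min_le_right _ _))
  set At := A + C d * X ^ p with hAtdef
  have hAtz' : ∀ z : ℂ, At.eval z = A.eval z + d * z ^ p := by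
    intro z; simp [hAtdef]
  -- analytic function and its power series
  have hA_an : AnalyticAt ℂ (fun z : ℂ => At.eval z) 0 :=
    (AnalyticOnNhd.eval_polynomial (𝕜 := ℂ) At) 0 (Set.mem_univ 0)
  have hB_an : AnalyticAt ℂ (fun z : ℂ => Bt.eval z) 0 :=
    (AnalyticOnNhd.eval_polynomial (𝕜 := ℂ) Bt) 0 (Set.mem_univ 0)
  obtain ⟨ps, hps⟩ := hA_an.div hB_an hBt0ne
  have hcoeff := ps_coeff_eq At Bt hBt0ne hps
  have hdecomp : ps.coeff = fun n => αf n + d * (if p ≤ n then βf (n - p) else 0) := by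
    funext n
    rw [hcoeff]
    exact coeff_decomp A Bt d p n
  refine ⟨c, d, hcne, hdne, hcε, hdε, ?_, ?_, ?_⟩
  · -- Bt nonzero on K ∪ L ∪ {0}
    intro z hz
    rcases hz with hz | hz
    · exact hBtne z hz
    · rw [Set.mem_singleton_iff] at hz
      rw [hz]
      exact hBt0ne
  · -- the sup estimate
    intro z hz
    have hBzne : B.eval z ≠ 0 := hBKL z hz
    have hBtzne : Bt.eval z ≠ 0 := hBtne z hz
    have key : At.eval z / Bt.eval z - A.eval z / B.eval z
        = (d * z ^ p * B.eval z - A.eval z * (c * z) ^ q) / (Bt.eval z * B.eval z) := by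
      rw [div_sub_div _ _ hBtzne hBzne]
      congr 1
      rw [hAtz' z, hBtz' z]
      ring
    show ‖At.eval z / Bt.eval z - A.eval z / B.eval z‖ < a
    rw [key, norm_div]
    have h₁ : ‖d * z ^ p * B.eval z‖ ≤ t := by
      calc ‖d * z ^ p * B.eval z‖ = ‖d‖ * ‖z‖ ^ p * ‖B.eval z‖ := by
            rw [norm_mul, norm_mul, norm_pow]
        _ ≤ (t / (R ^ p * MB)) * R ^ p * MB := by
            gcongr <;> first
              | exact hdt
              | exact hRz z hz
              | exact hMBz z hz
              | positivity
        _ = t := by field_simp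
    have h₂ : ‖A.eval z * (c * z) ^ q‖ ≤ t := by
      calc ‖A.eval z * (c * z) ^ q‖ = ‖A.eval z‖ * ‖((c * z) ^ q : ℂ)‖ := norm_mul _ _
        _ ≤ MA * (creal * R) := by
            gcongr <;> first
              | exact hMAz z hz
              | exact hccR z hz
              | positivity
        _ ≤ MA * (t / MA) := by
            gcongr <;> first
              | exact hcRt
              | positivity
        _ = t := by field_simp
    have hnum : ‖d * z ^ p * B.eval z - A.eval z * (c * z) ^ q‖ ≤ 2 * t := by
      calc ‖d * z ^ p * B.eval z - A.eval z * (c * z) ^ q‖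
          ≤ ‖d * z ^ p * B.eval z‖ + ‖A.eval z * (c * z) ^ q‖ := norm_sub_le _ _
        _ ≤ 2 * t := by linarith
    have hden : m / 2 * m ≤ ‖Bt.eval z * B.eval z‖ := by
      rw [norm_mul]
      exact mul_le_mul (hBtlow z hz) (hmB z hz) (le_of_lt hm) (norm_nonneg _)
    have hfrac : ‖d * z ^ p * B.eval z - A.eval z * (c * z) ^ q‖ / ‖Bt.eval z * B.eval z‖
        ≤ 2 * t / (m / 2 * m) := by
      apply div_le_div₀ (by positivity) hnum (by positivity) hden
    have hval : 2 * t / (m / 2 * m) = a / 2 := by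
      rw [htdef]
      field_simp
      ring
    rw [hval] at hfrac
    linarith
  · -- power series data
    refine ⟨ps, hps, ?_, ?_⟩
    · rw [hdecomp]
      intro h
      exact hdbad (Set.mem_union_left _ h)
    · set t0 := (B.eval 0)⁻¹ with ht0
      have ht0ne : t0 ≠ 0 := inv_ne_zero hB0
      refine ⟨C t0 * At, C t0 * Bt, ⟨?_, ?_, ?_, ⟨ps, ?_, fun ν _ => rfl⟩⟩, by ring⟩
      · apply le_trans (natDegree_C_mul_le _ _)
        apply le_trans (natDegree_add_le _ _)
        apply max_le (le_of_lt hp)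
        apply le_trans (natDegree_mul_le)
        simp
      · apply le_trans (natDegree_C_mul_le _ _)
        apply le_trans (natDegree_add_le _ _)
        apply max_le (le_of_lt hq)
        apply le_trans (natDegree_pow_le)
        have : (C c * X).natDegree ≤ 1 := by
          apply le_trans (natDegree_mul_le)
          simp
        calc q * (C c * X).natDegree ≤ q * 1 := by gcongr
          _ = q := mul_one q
      · rw [coeff_C_mul, Polynomial.coeff_zero_eq_eval_zero, hBt0, ht0]
        exact inv_mul_cancel₀ hB0
      · have hfeq : (fun z => (C t0 * At).eval z / (C t0 * Bt).eval z)
            = fun z => At.eval z / Bt.eval z := by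
          funext z
          rw [eval_mul, eval_mul, eval_C]
          exact mul_div_mul_left _ _ ht0ne
        rw [hfeq]
        exact hps
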